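/- arXiv:2504.04554 — 2 statements merged into one kernel-verified Lean document; each statement's English description precedes it below -/
import Mathlib

section
/- (Backward error bound for the approximate Sherman–Morrison–Woodbury formula.) Let A be an invertible n×n real matrix, let U, V be n×k real matrices, set λ = ‖U‖·‖V‖ and B = A + UVᵀ, and assume ‖I + Vᵀ A⁻¹ U‖ ≤ β. Let X be an invertible n×n matrix with ‖X − A⁻¹‖ ≤ ε₁ where ε₁ < 1/(2‖A‖); assume I + Vᵀ X U is invertible; and let W be an invertible k×k matrix with ‖W − (I + Vᵀ X U)⁻¹‖ ≤ ε₂ such that W⁻¹ − Vᵀ X U is invertible, ε₂ < 1/(2(β + λ ε₁)), and 2(β + λ ε₁)² ε₂ < 1/2. Then the matrix X − X U W Vᵀ X is invertible and ‖B − (X − X U W Vᵀ X)⁻¹‖ ≤ 2 ε₁ ‖A‖² + 4 λ ε₂ (β + λ ε₁)². -/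
open Matrix
open scoped Matrix.Norms.L2Operator

set_option maxHeartbeats 1000000

lemma smw_norm_one_le (m : ℕ) : ‖(1 : Matrix (Fin m) (Fin m) ℝ)‖ ≤ 1 := by
  have h := Matrix.l2_opNorm_conjTranspose_mul_self (1 : Matrix (Fin m) (Fin m) ℝ)
  simp only [conjTranspose_one, mul_one] at h
  nlinarith [norm_nonneg (1 : Matrix (Fin m) (Fin m) ℝ)]

/-- Backward error bound for the approximate Sherman–Morrison–Woodbury formula. -/
theorem smw_backward_error {n k : ℕ} (A : Matrix (Fin n) (Fin n) ℝ) (hA : IsUnit A)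
    (U V : Matrix (Fin n) (Fin k) ℝ) (lam : ℝ) (hlam : lam = ‖U‖ * ‖V‖)
    (B : Matrix (Fin n) (Fin n) ℝ) (hB : B = A + U * Vᵀ)
    (β : ℝ) (hβ : ‖(1 : Matrix (Fin k) (Fin k) ℝ) + Vᵀ * A⁻¹ * U‖ ≤ β)
    (X : Matrix (Fin n) (Fin n) ℝ) (hX : IsUnit X) (ε₁ ε₂ : ℝ)
    (hXA : ‖X - A⁻¹‖ ≤ ε₁) (hε₁ : ε₁ < 1 / (2 * ‖A‖))
    (hcapX : IsUnit ((1 : Matrix (Fin k) (Fin k) ℝ) + Vᵀ * X * U))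
    (W : Matrix (Fin k) (Fin k) ℝ) (hW : IsUnit W)
    (hWcap : ‖W - ((1 : Matrix (Fin k) (Fin k) ℝ) + Vᵀ * X * U)⁻¹‖ ≤ ε₂)
    (hWinv : IsUnit (W⁻¹ - Vᵀ * X * U))
    (hε₂ : ε₂ < 1 / (2 * (β + lam * ε₁)))
    (hε₂' : 2 * (β + lam * ε₁) ^ 2 * ε₂ < 1 / 2) :
    IsUnit (X - X * U * W * Vᵀ * X) ∧
      ‖B - (X - X * U * W * Vᵀ * X)⁻¹‖ ≤
        2 * ε₁ * ‖A‖ ^ 2 + 4 * lam * ε₂ * (β + lam * ε₁) ^ 2 := by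
  -- scalar preliminaries
  have hε₁0 : 0 ≤ ε₁ := le_trans (norm_nonneg _) hXA
  have hε₂0 : 0 ≤ ε₂ := le_trans (norm_nonneg _) hWcap
  have hβ0 : 0 ≤ β := le_trans (norm_nonneg _) hβ
  have hlam0 : 0 ≤ lam := hlam ▸ mul_nonneg (norm_nonneg _) (norm_nonneg _)
  set μ : ℝ := β + lam * ε₁ with hμdef
  clear_value μ
  have hμ0 : 0 ≤ μ := by rw [hμdef]; positivity
  have hμpos : 0 < μ := by
    rcases hμ0.lt_or_eq with h | h
    · exact h
    · rw [← h] at hε₂; norm_num at hε₂; linarith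
  have hApos : 0 < ‖A‖ := by
    rcases (norm_nonneg A).lt_or_eq with h | h
    · exact h
    · rw [← h] at hε₁; norm_num at hε₁; linarith
  have hAε₁ : ‖A‖ * ε₁ < 1 / 2 := by
    have h2 : (0:ℝ) < 2 * ‖A‖ := by linarith
    have := (lt_div_iff₀ h2).mp hε₁
    nlinarith
  have hμε₂ : μ * ε₂ < 1 / 2 := by
    have h2 : (0:ℝ) < 2 * μ := by linarith
    have := (lt_div_iff₀ h2).mp hε₂
    nlinarith
  -- matrix inverse identities
  have hAi : A * A⁻¹ = 1 := A.mul_nonsing_inv (A.isUnit_iff_isUnit_det.mp hA)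
  have hAi' : A⁻¹ * A = 1 := A.nonsing_inv_mul (A.isUnit_iff_isUnit_det.mp hA)
  have hXi : X * X⁻¹ = 1 := X.mul_nonsing_inv (X.isUnit_iff_isUnit_det.mp hX)
  have hXi' : X⁻¹ * X = 1 := X.nonsing_inv_mul (X.isUnit_iff_isUnit_det.mp hX)
  have hWi : W * W⁻¹ = 1 := W.mul_nonsing_inv (W.isUnit_iff_isUnit_det.mp hW)
  have hWi' : W⁻¹ * W = 1 := W.nonsing_inv_mul (W.isUnit_iff_isUnit_det.mp hW)
  set Zm : Matrix (Fin k) (Fin k) ℝ := 1 + Vᵀ * X * U with hZmdef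
  have hZi : Zm * Zm⁻¹ = 1 := Zm.mul_nonsing_inv (Zm.isUnit_iff_isUnit_det.mp hcapX)
  have hZi' : Zm⁻¹ * Zm = 1 := Zm.nonsing_inv_mul (Zm.isUnit_iff_isUnit_det.mp hcapX)
  set C : Matrix (Fin k) (Fin k) ℝ := (W⁻¹ - Vᵀ * X * U)⁻¹ with hCdef
  have hCi : (W⁻¹ - Vᵀ * X * U) * C = 1 :=
    (W⁻¹ - Vᵀ * X * U).mul_nonsing_inv ((W⁻¹ - Vᵀ * X * U).isUnit_iff_isUnit_det.mp hWinv)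
  have hCi' : C * (W⁻¹ - Vᵀ * X * U) = 1 :=
    (W⁻¹ - Vᵀ * X * U).nonsing_inv_mul ((W⁻¹ - Vᵀ * X * U).isUnit_iff_isUnit_det.mp hWinv)
  clear_value Zm C
  -- the key k×k identities
  have e2 : C - W * (Vᵀ * X * U) * C = W := by
    calc C - W * (Vᵀ * X * U) * C
        = (W * W⁻¹) * C - W * (Vᵀ * X * U) * C := by rw [hWi, one_mul]
      _ = W * ((W⁻¹ - Vᵀ * X * U) * C) := by noncomm_ring
      _ = W := by rw [hCi, mul_one]
  have h1 : C = W + W * (Vᵀ * X * U) * C := sub_eq_iff_eq_add.mp e2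
  have e2' : C - C * (Vᵀ * X * U) * W = W := by
    calc C - C * (Vᵀ * X * U) * W
        = C * (W⁻¹ * W) - C * (Vᵀ * X * U) * W := by rw [hWi', mul_one]
      _ = (C * (W⁻¹ - Vᵀ * X * U)) * W := by noncomm_ring
      _ = W := by rw [hCi', one_mul]
  have h1' : C = W + C * (Vᵀ * X * U) * W := sub_eq_iff_eq_add.mp e2'
  -- invertibility of M = X - X U W Vᵀ X with inverse N = X⁻¹ + U C Vᵀ
  have hMN : (X - X * U * W * Vᵀ * X) * (X⁻¹ + U * C * Vᵀ) = 1 := by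
    have h2 : C * Vᵀ = W * Vᵀ + W * (Vᵀ * (X * (U * (C * Vᵀ)))) := by
      conv_lhs => rw [h1]
      simp only [Matrix.add_mul, Matrix.mul_assoc]
    have h3 : W * Vᵀ = C * Vᵀ - W * (Vᵀ * (X * (U * (C * Vᵀ)))) := by
      rw [eq_sub_iff_add_eq]; exact h2.symm
    simp only [Matrix.sub_mul, Matrix.mul_add, Matrix.add_mul, Matrix.mul_sub,
      Matrix.mul_assoc, hXi, Matrix.mul_one, Matrix.one_mul]
    rw [h3]
    simp only [Matrix.mul_sub]
    abel
  have hNM : (X⁻¹ + U * C * Vᵀ) * (X - X * U * W * Vᵀ * X) = 1 := by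
    have hXi2 : ∀ {j : ℕ} (M : Matrix (Fin n) (Fin j) ℝ), X⁻¹ * (X * M) = M := by
      intro j M; rw [← Matrix.mul_assoc, hXi', Matrix.one_mul]
    have h2 : C * (Vᵀ * X) = W * (Vᵀ * X) + C * (Vᵀ * (X * (U * (W * (Vᵀ * X))))) := by
      conv_lhs => rw [h1']
      simp only [Matrix.add_mul, Matrix.mul_assoc]
    simp only [Matrix.sub_mul, Matrix.mul_add, Matrix.add_mul, Matrix.mul_sub,
      Matrix.mul_assoc, hXi', hXi2, Matrix.mul_one, Matrix.one_mul]
    rw [h2]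
    simp only [Matrix.mul_add]
    abel
  have hMunit : IsUnit (X - X * U * W * Vᵀ * X) :=
    ⟨⟨X - X * U * W * Vᵀ * X, X⁻¹ + U * C * Vᵀ, hMN, hNM⟩, rfl⟩
  have hMinv : (X - X * U * W * Vᵀ * X)⁻¹ = X⁻¹ + U * C * Vᵀ :=
    Matrix.inv_eq_right_inv hMN
  refine ⟨hMunit, ?_⟩
  -- norm bounds
  have hVt : ‖Vᵀ‖ = ‖V‖ := by
    rw [← Matrix.conjTranspose_eq_transpose_of_trivial, Matrix.l2_opNorm_conjTranspose]
  -- bound on ‖X⁻¹‖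
  have hG : A * X = 1 + A * (X - A⁻¹) := by
    have e : A * (X - A⁻¹) = A * X - A * A⁻¹ := by rw [Matrix.mul_sub]
    rw [e, hAi]; abel
  have hGdet := ((A * X).isUnit_iff_isUnit_det).mp (hA.mul hX)
  have hGi : (A * X) * (A * X)⁻¹ = 1 := (A * X).mul_nonsing_inv hGdet
  have hG2 : (A * X)⁻¹ = 1 - A * (X - A⁻¹) * (A * X)⁻¹ := by
    have h : (1 + A * (X - A⁻¹)) * (A * X)⁻¹ = 1 := by rw [← hG]; exact hGi
    rw [Matrix.add_mul, Matrix.one_mul] at h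
    rw [eq_sub_iff_add_eq]; exact h
  have hGn : ‖(A * X)⁻¹‖ ≤ 2 := by
    have h' : ‖(A * X)⁻¹‖ ≤ 1 + ‖A‖ * ε₁ * ‖(A * X)⁻¹‖ := by
      calc ‖(A * X)⁻¹‖ = ‖(1 : Matrix (Fin n) (Fin n) ℝ) - A * (X - A⁻¹) * (A * X)⁻¹‖ := by
            rw [← hG2]
        _ ≤ ‖(1 : Matrix (Fin n) (Fin n) ℝ)‖ + ‖A * (X - A⁻¹) * (A * X)⁻¹‖ := norm_sub_le _ _
        _ ≤ 1 + ‖A‖ * ε₁ * ‖(A * X)⁻¹‖ := by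
            have hb : ‖A * (X - A⁻¹) * (A * X)⁻¹‖ ≤ ‖A‖ * ε₁ * ‖(A * X)⁻¹‖ := by
              calc ‖A * (X - A⁻¹) * (A * X)⁻¹‖
                  ≤ ‖A * (X - A⁻¹)‖ * ‖(A * X)⁻¹‖ := Matrix.l2_opNorm_mul _ _
                _ ≤ (‖A‖ * ‖X - A⁻¹‖) * ‖(A * X)⁻¹‖ := by
                    gcongr; exact Matrix.l2_opNorm_mul _ _
                _ ≤ ‖A‖ * ε₁ * ‖(A * X)⁻¹‖ := by gcongr
            exact add_le_add (smw_norm_one_le n) hb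
    nlinarith [norm_nonneg ((A * X)⁻¹)]
  have hXinv_eq : X⁻¹ = (A * X)⁻¹ * A := by
    rw [Matrix.mul_inv_rev, Matrix.mul_assoc, hAi', Matrix.mul_one]
  have hXn : ‖X⁻¹‖ ≤ 2 * ‖A‖ := by
    rw [hXinv_eq]
    calc ‖(A * X)⁻¹ * A‖ ≤ ‖(A * X)⁻¹‖ * ‖A‖ := Matrix.l2_opNorm_mul _ _
      _ ≤ 2 * ‖A‖ := by gcongr
  -- first term
  have hAXeq : A - X⁻¹ = X⁻¹ * ((X - A⁻¹) * A) := by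
    have : X⁻¹ * ((X - A⁻¹) * A) = (X⁻¹ * X) * A - X⁻¹ * (A⁻¹ * A) := by
      simp only [Matrix.mul_sub, Matrix.sub_mul, Matrix.mul_assoc]
    rw [this, hXi', hAi', Matrix.one_mul, Matrix.mul_one]
  have term1 : ‖A - X⁻¹‖ ≤ 2 * ε₁ * ‖A‖ ^ 2 := by
    rw [hAXeq]
    calc ‖X⁻¹ * ((X - A⁻¹) * A)‖ ≤ ‖X⁻¹‖ * ‖(X - A⁻¹) * A‖ := Matrix.l2_opNorm_mul _ _
      _ ≤ ‖X⁻¹‖ * (‖X - A⁻¹‖ * ‖A‖) := by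
          gcongr; exact Matrix.l2_opNorm_mul _ _
      _ ≤ (2 * ‖A‖) * (ε₁ * ‖A‖) := by gcongr
      _ = 2 * ε₁ * ‖A‖ ^ 2 := by ring
  -- capacitance norms
  have hZn : ‖Zm‖ ≤ μ := by
    have hsplit : Zm = ((1 : Matrix (Fin k) (Fin k) ℝ) + Vᵀ * A⁻¹ * U) + Vᵀ * (X - A⁻¹) * U := by
      rw [hZmdef]
      have : Vᵀ * (X - A⁻¹) * U = Vᵀ * X * U - Vᵀ * A⁻¹ * U := by
        simp only [Matrix.mul_sub, Matrix.sub_mul]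
      rw [this]; abel
    rw [hsplit]
    have hb : ‖Vᵀ * (X - A⁻¹) * U‖ ≤ lam * ε₁ := by
      calc ‖Vᵀ * (X - A⁻¹) * U‖ ≤ ‖Vᵀ * (X - A⁻¹)‖ * ‖U‖ := Matrix.l2_opNorm_mul _ _
        _ ≤ (‖Vᵀ‖ * ‖X - A⁻¹‖) * ‖U‖ := by gcongr; exact Matrix.l2_opNorm_mul _ _
        _ ≤ (‖V‖ * ε₁) * ‖U‖ := by rw [hVt]; gcongr
        _ = lam * ε₁ := by rw [hlam]; ring
    calc ‖((1 : Matrix (Fin k) (Fin k) ℝ) + Vᵀ * A⁻¹ * U) + Vᵀ * (X - A⁻¹) * U‖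
        ≤ ‖(1 : Matrix (Fin k) (Fin k) ℝ) + Vᵀ * A⁻¹ * U‖ + ‖Vᵀ * (X - A⁻¹) * U‖ :=
          norm_add_le _ _
      _ ≤ μ := by rw [hμdef]; exact add_le_add hβ hb
  -- bound on ‖W⁻¹‖
  have hZW : Zm * W = 1 + Zm * (W - Zm⁻¹) := by
    have e : Zm * (W - Zm⁻¹) = Zm * W - Zm * Zm⁻¹ := by rw [Matrix.mul_sub]
    rw [e, hZi]; abel
  have hZWdet := ((Zm * W).isUnit_iff_isUnit_det).mp (hcapX.mul hW)
  have hZWi : (Zm * W) * (Zm * W)⁻¹ = 1 := (Zm * W).mul_nonsing_inv hZWdet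
  have hH2 : (Zm * W)⁻¹ = 1 - Zm * (W - Zm⁻¹) * (Zm * W)⁻¹ := by
    have h : (1 + Zm * (W - Zm⁻¹)) * (Zm * W)⁻¹ = 1 := by rw [← hZW]; exact hZWi
    rw [Matrix.add_mul, Matrix.one_mul] at h
    rw [eq_sub_iff_add_eq]; exact h
  have hHn : ‖(Zm * W)⁻¹‖ ≤ 2 := by
    have h' : ‖(Zm * W)⁻¹‖ ≤ 1 + μ * ε₂ * ‖(Zm * W)⁻¹‖ := by
      calc ‖(Zm * W)⁻¹‖
          = ‖(1 : Matrix (Fin k) (Fin k) ℝ) - Zm * (W - Zm⁻¹) * (Zm * W)⁻¹‖ := by rw [← hH2]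
        _ ≤ ‖(1 : Matrix (Fin k) (Fin k) ℝ)‖ + ‖Zm * (W - Zm⁻¹) * (Zm * W)⁻¹‖ := norm_sub_le _ _
        _ ≤ 1 + μ * ε₂ * ‖(Zm * W)⁻¹‖ := by
            have hb : ‖Zm * (W - Zm⁻¹) * (Zm * W)⁻¹‖ ≤ μ * ε₂ * ‖(Zm * W)⁻¹‖ := by
              calc ‖Zm * (W - Zm⁻¹) * (Zm * W)⁻¹‖
                  ≤ ‖Zm * (W - Zm⁻¹)‖ * ‖(Zm * W)⁻¹‖ := Matrix.l2_opNorm_mul _ _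
                _ ≤ (‖Zm‖ * ‖W - Zm⁻¹‖) * ‖(Zm * W)⁻¹‖ := by
                    gcongr; exact Matrix.l2_opNorm_mul _ _
                _ ≤ (μ * ε₂) * ‖(Zm * W)⁻¹‖ := by gcongr
            exact add_le_add (smw_norm_one_le k) hb
    nlinarith [norm_nonneg ((Zm * W)⁻¹)]
  have hWinv_eq : W⁻¹ = (Zm * W)⁻¹ * Zm := by
    rw [Matrix.mul_inv_rev, Matrix.mul_assoc, hZi', Matrix.mul_one]
  have hWn : ‖W⁻¹‖ ≤ 2 * μ := by
    rw [hWinv_eq]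
    calc ‖(Zm * W)⁻¹ * Zm‖ ≤ ‖(Zm * W)⁻¹‖ * ‖Zm‖ := Matrix.l2_opNorm_mul _ _
      _ ≤ 2 * μ := by gcongr
  -- bound on ‖W⁻¹ - Zm‖
  have hD : W⁻¹ - Zm = -(W⁻¹ * (W - Zm⁻¹) * Zm) := by
    have e : W⁻¹ * (W - Zm⁻¹) * Zm = (W⁻¹ * W) * Zm - W⁻¹ * (Zm⁻¹ * Zm) := by
      simp only [Matrix.mul_sub, Matrix.sub_mul, Matrix.mul_assoc]
    rw [e, hWi', hZi', Matrix.one_mul, Matrix.mul_one]; abel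
  have hDn : ‖W⁻¹ - Zm‖ ≤ 2 * μ ^ 2 * ε₂ := by
    rw [hD, norm_neg]
    calc ‖W⁻¹ * (W - Zm⁻¹) * Zm‖ ≤ ‖W⁻¹ * (W - Zm⁻¹)‖ * ‖Zm‖ := Matrix.l2_opNorm_mul _ _
      _ ≤ (‖W⁻¹‖ * ‖W - Zm⁻¹‖) * ‖Zm‖ := by gcongr; exact Matrix.l2_opNorm_mul _ _
      _ ≤ ((2 * μ) * ε₂) * μ := by gcongr
      _ = 2 * μ ^ 2 * ε₂ := by ring
  -- bound on ‖C‖ and ‖1 - C‖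
  have h5 : ((1 : Matrix (Fin k) (Fin k) ℝ) + (W⁻¹ - Zm)) * C = 1 := by
    have e : (1 : Matrix (Fin k) (Fin k) ℝ) + (W⁻¹ - Zm) = W⁻¹ - Vᵀ * X * U := by
      rw [hZmdef]; abel
    rw [e]; exact hCi
  have hCeq : C = 1 - (W⁻¹ - Zm) * C := by
    rw [Matrix.add_mul, Matrix.one_mul] at h5
    rw [eq_sub_iff_add_eq]; exact h5
  have hCn : ‖C‖ ≤ 2 := by
    have h' : ‖C‖ ≤ 1 + 2 * μ ^ 2 * ε₂ * ‖C‖ := by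
      calc ‖C‖ = ‖(1 : Matrix (Fin k) (Fin k) ℝ) - (W⁻¹ - Zm) * C‖ := by rw [← hCeq]
        _ ≤ ‖(1 : Matrix (Fin k) (Fin k) ℝ)‖ + ‖(W⁻¹ - Zm) * C‖ := norm_sub_le _ _
        _ ≤ 1 + 2 * μ ^ 2 * ε₂ * ‖C‖ := by
            have hb : ‖(W⁻¹ - Zm) * C‖ ≤ 2 * μ ^ 2 * ε₂ * ‖C‖ := by
              calc ‖(W⁻¹ - Zm) * C‖ ≤ ‖W⁻¹ - Zm‖ * ‖C‖ := Matrix.l2_opNorm_mul _ _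
                _ ≤ 2 * μ ^ 2 * ε₂ * ‖C‖ := by gcongr
            exact add_le_add (smw_norm_one_le k) hb
    nlinarith [norm_nonneg C, mul_le_mul_of_nonneg_right hε₂'.le (norm_nonneg C)]
  have h1Cn : ‖(1 : Matrix (Fin k) (Fin k) ℝ) - C‖ ≤ 4 * μ ^ 2 * ε₂ := by
    have h1C : (1 : Matrix (Fin k) (Fin k) ℝ) - C = (W⁻¹ - Zm) * C := by
      calc (1 : Matrix (Fin k) (Fin k) ℝ) - C = 1 - (1 - (W⁻¹ - Zm) * C) := by rw [← hCeq]
        _ = (W⁻¹ - Zm) * C := by abel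
    rw [h1C]
    calc ‖(W⁻¹ - Zm) * C‖ ≤ ‖W⁻¹ - Zm‖ * ‖C‖ := Matrix.l2_opNorm_mul _ _
      _ ≤ (2 * μ ^ 2 * ε₂) * 2 := by gcongr
      _ = 4 * μ ^ 2 * ε₂ := by ring
  -- second term
  have term2 : ‖U * ((1 : Matrix (Fin k) (Fin k) ℝ) - C) * Vᵀ‖ ≤ 4 * lam * ε₂ * μ ^ 2 := by
    calc ‖U * ((1 : Matrix (Fin k) (Fin k) ℝ) - C) * Vᵀ‖
        ≤ ‖U * ((1 : Matrix (Fin k) (Fin k) ℝ) - C)‖ * ‖Vᵀ‖ := Matrix.l2_opNorm_mul _ _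
      _ ≤ (‖U‖ * ‖(1 : Matrix (Fin k) (Fin k) ℝ) - C‖) * ‖Vᵀ‖ := by
          gcongr; exact Matrix.l2_opNorm_mul _ _
      _ ≤ (‖U‖ * (4 * μ ^ 2 * ε₂)) * ‖V‖ := by rw [hVt]; gcongr
      _ = 4 * (‖U‖ * ‖V‖) * ε₂ * μ ^ 2 := by ring
      _ = 4 * lam * ε₂ * μ ^ 2 := by rw [hlam]
  -- final assembly
  rw [hB, hMinv]
  have hsplit2 : A + U * Vᵀ - (X⁻¹ + U * C * Vᵀ)
      = (A - X⁻¹) + U * ((1 : Matrix (Fin k) (Fin k) ℝ) - C) * Vᵀ := by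
    have e : U * ((1 : Matrix (Fin k) (Fin k) ℝ) - C) * Vᵀ = U * Vᵀ - U * C * Vᵀ := by
      simp only [Matrix.mul_sub, Matrix.sub_mul, Matrix.mul_one]
    rw [e]; abel
  rw [hsplit2]
  calc ‖(A - X⁻¹) + U * ((1 : Matrix (Fin k) (Fin k) ℝ) - C) * Vᵀ‖
      ≤ ‖A - X⁻¹‖ + ‖U * ((1 : Matrix (Fin k) (Fin k) ℝ) - C) * Vᵀ‖ := norm_add_le _ _
    _ ≤ 2 * ε₁ * ‖A‖ ^ 2 + 4 * lam * ε₂ * μ ^ 2 := add_le_add term1 term2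
end

section
/- (Backward error bound, small-update case.) Let A be an invertible n×n real matrix, let U, V be n×k real matrices, set λ = ‖U‖·‖V‖, β = ‖I + Vᵀ A⁻¹ U‖, and B = A + UVᵀ. Assume λ ≤ (1/2)·σ_min(A) and σ_min(A) ≤ 1. Let X be an invertible n×n matrix with ‖X − A⁻¹‖ ≤ ε₁ where ε₁ ≤ 1 and ε₁ < 1/(2‖A‖); assume I + Vᵀ X U is invertible; and let W be an invertible k×k matrix with ‖W − (I + Vᵀ X U)⁻¹‖ ≤ ε₂ such that W⁻¹ − Vᵀ X U is invertible, ε₂ ≤ 1, ε₂ < 1/(2(β + λ ε₁)), and 2(β + λ ε₁)² ε₂ < 1/2. Then the matrix X − X U W Vᵀ X is invertible and ‖B − (X − X U W Vᵀ X)⁻¹‖ ≤ 2 ε₁ ‖A‖² + 8 ε₂. -/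
open Matrix
open scoped Matrix.Norms.L2Operator

lemma aux_one_le {m : ℕ} : ‖(1 : Matrix (Fin m) (Fin m) ℝ)‖ ≤ 1 := by
  rw [Matrix.cstar_norm_def, _root_.map_one]
  exact ContinuousLinearMap.norm_id_le

lemma aux_unit {m : ℕ} (M : Matrix (Fin m) (Fin m) ℝ) (h : ‖M‖ < 1) :
    IsUnit (1 + M) := by
  rw [Matrix.isUnit_iff_isUnit_det, isUnit_iff_ne_zero]
  intro hdet
  obtain ⟨v, hv0, hv⟩ := Matrix.exists_mulVec_eq_zero_iff.mpr hdet
  set v' : EuclideanSpace ℝ (Fin m) := (EuclideanSpace.equiv (Fin m) ℝ).symm v with hv'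
  have h1 : ‖(EuclideanSpace.equiv (Fin m) ℝ).symm (M *ᵥ v')‖ ≤ ‖M‖ * ‖v'‖ :=
    Matrix.l2_opNorm_mulVec M v'
  have h2 : M *ᵥ (v' : Fin m → ℝ) = -v := by
    have : (1 + M) *ᵥ v = 1 *ᵥ v + M *ᵥ v := Matrix.add_mulVec 1 M v
    rw [hv, Matrix.one_mulVec] at this
    exact eq_neg_of_add_eq_zero_right this.symm
  rw [h2] at h1
  have h3 : ‖(EuclideanSpace.equiv (Fin m) ℝ).symm (-v)‖ = ‖v'‖ := by
    rw [map_neg, norm_neg]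
  rw [h3] at h1
  have hvnorm : 0 < ‖v'‖ := by
    rw [norm_pos_iff]
    simpa [hv'] using hv0
  nlinarith

lemma aux_inv_norm {m : ℕ} (M : Matrix (Fin m) (Fin m) ℝ) (h : ‖M‖ < 1) :
    ‖(1 + M)⁻¹‖ ≤ (1 - ‖M‖)⁻¹ := by
  have hu := aux_unit M h
  have hdet := (Matrix.isUnit_iff_isUnit_det _).mp hu
  have key : (1 + M)⁻¹ * (1 + M) = 1 := Matrix.nonsing_inv_mul _ hdet
  have key2 : (1 + M)⁻¹ = 1 - (1 + M)⁻¹ * M := by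
    rw [Matrix.mul_add, Matrix.mul_one] at key
    exact eq_sub_of_add_eq key
  have hb : ‖(1 + M)⁻¹‖ ≤ 1 + ‖(1 + M)⁻¹‖ * ‖M‖ := by
    calc ‖(1 + M)⁻¹‖ = ‖(1:Matrix (Fin m) (Fin m) ℝ) - (1 + M)⁻¹ * M‖ := by rw [← key2]
      _ ≤ ‖(1:Matrix (Fin m) (Fin m) ℝ)‖ + ‖(1 + M)⁻¹ * M‖ := norm_sub_le _ _
      _ ≤ 1 + ‖(1 + M)⁻¹‖ * ‖M‖ := by
          gcongr
          · exact aux_one_le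
          · exact Matrix.l2_opNorm_mul _ _
  have hM0 : 0 ≤ ‖M‖ := norm_nonneg _
  have hc0 : 0 ≤ ‖(1 + M)⁻¹‖ := norm_nonneg _
  have h5 : (0:ℝ) < 1 - ‖M‖ := by linarith
  rw [show ((1:ℝ) - ‖M‖)⁻¹ = 1/(1-‖M‖) from (one_div _).symm, le_div_iff₀ h5]
  nlinarith

lemma aux_transpose_norm {n k : ℕ} (V : Matrix (Fin n) (Fin k) ℝ) : ‖Vᵀ‖ = ‖V‖ := by
  rw [← Matrix.conjTranspose_eq_transpose_of_trivial]
  exact Matrix.l2_opNorm_conjTranspose V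

set_option maxHeartbeats 1000000 in
/-- Backward error bound for approximate SMW, small-update case.
Here σ_min(A) = ‖A⁻¹‖⁻¹. -/
theorem smw_backward_error_small_update {n k : ℕ}
    (A : Matrix (Fin n) (Fin n) ℝ) (hA : IsUnit A)
    (U V : Matrix (Fin n) (Fin k) ℝ) (lam : ℝ) (hlam : lam = ‖U‖ * ‖V‖)
    (β : ℝ) (hβ : β = ‖(1 : Matrix (Fin k) (Fin k) ℝ) + Vᵀ * A⁻¹ * U‖)
    (B : Matrix (Fin n) (Fin n) ℝ) (hB : B = A + U * Vᵀ)
    (hsmall : lam ≤ (1 / 2) * ‖A⁻¹‖⁻¹) (hσ : ‖A⁻¹‖⁻¹ ≤ 1)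
    (X : Matrix (Fin n) (Fin n) ℝ) (hX : IsUnit X) (ε₁ ε₂ : ℝ)
    (hXA : ‖X - A⁻¹‖ ≤ ε₁) (hε₁1 : ε₁ ≤ 1) (hε₁ : ε₁ < 1 / (2 * ‖A‖))
    (hcapX : IsUnit ((1 : Matrix (Fin k) (Fin k) ℝ) + Vᵀ * X * U))
    (W : Matrix (Fin k) (Fin k) ℝ) (hW : IsUnit W)
    (hWcap : ‖W - ((1 : Matrix (Fin k) (Fin k) ℝ) + Vᵀ * X * U)⁻¹‖ ≤ ε₂)
    (hWinv : IsUnit (W⁻¹ - Vᵀ * X * U))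
    (hε₂1 : ε₂ ≤ 1) (hε₂ : ε₂ < 1 / (2 * (β + lam * ε₁)))
    (hε₂' : 2 * (β + lam * ε₁) ^ 2 * ε₂ < 1 / 2) :
    IsUnit (X - X * U * W * Vᵀ * X) ∧
      ‖B - (X - X * U * W * Vᵀ * X)⁻¹‖ ≤ 2 * ε₁ * ‖A‖ ^ 2 + 8 * ε₂ := by
  -- basic scalars
  have hε₁0 : 0 ≤ ε₁ := le_trans (norm_nonneg _) hXA
  have hε₂0 : 0 ≤ ε₂ := le_trans (norm_nonneg _) hWcap
  have hlam0 : 0 ≤ lam := by rw [hlam]; positivity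
  have hβ0 : 0 ≤ β := by rw [hβ]; positivity
  have hA0 : 0 < ‖A‖ := by
    rcases (norm_nonneg A).eq_or_lt with h | h
    · exfalso; rw [← h] at hε₁; norm_num at hε₁; linarith
    · exact h
  have hAε₁ : ‖A‖ * ε₁ < 1 / 2 := by
    rw [lt_div_iff₀ (by positivity)] at hε₁
    nlinarith
  obtain ⟨μ, hμ⟩ : ∃ μ : ℝ, μ = β + lam * ε₁ := ⟨_, rfl⟩
  rw [← hμ] at hε₂ hε₂'
  have hμ0 : 0 ≤ μ := by rw [hμ]; positivity
  have hμpos : 0 < μ := by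
    rcases hμ0.eq_or_lt with h | h
    · exfalso; rw [← h] at hε₂; norm_num at hε₂; linarith
    · exact h
  have hμε₂ : μ * ε₂ < 1 / 2 := by
    rw [lt_div_iff₀ (by positivity)] at hε₂
    nlinarith
  -- matrix abbreviations (opaque)
  obtain ⟨E, hE⟩ : ∃ E, E = X - A⁻¹ := ⟨_, rfl⟩
  obtain ⟨C, hC⟩ : ∃ C, C = Vᵀ * X * U := ⟨_, rfl⟩
  rw [← hC] at hcapX hWcap hWinv
  obtain ⟨Z, hZdef⟩ : ∃ Z, Z = 1 + C := ⟨_, rfl⟩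
  rw [← hZdef] at hcapX hWcap
  obtain ⟨F, hF⟩ : ∃ F, F = W - Z⁻¹ := ⟨_, rfl⟩
  rw [← hF] at hWcap
  -- determinant units
  have hXdet : IsUnit X.det := (Matrix.isUnit_iff_isUnit_det X).mp hX
  have hAdet : IsUnit A.det := (Matrix.isUnit_iff_isUnit_det A).mp hA
  have hZdet : IsUnit Z.det := (Matrix.isUnit_iff_isUnit_det Z).mp hcapX
  have hWdet : IsUnit W.det := (Matrix.isUnit_iff_isUnit_det W).mp hW
  have hWCdet : IsUnit (W⁻¹ - C).det := (Matrix.isUnit_iff_isUnit_det _).mp hWinv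
  -- ‖Z‖ ≤ μ
  have hEnorm : ‖E‖ ≤ ε₁ := by rw [hE]; exact hXA
  have hVt : ‖Vᵀ‖ = ‖V‖ := aux_transpose_norm V
  have hCsplit : C = Vᵀ * A⁻¹ * U + Vᵀ * E * U := by
    rw [hC, hE, Matrix.mul_sub, Matrix.sub_mul]
    abel
  have hVEU : ‖Vᵀ * E * U‖ ≤ lam * ε₁ := by
    calc ‖Vᵀ * E * U‖ ≤ ‖Vᵀ * E‖ * ‖U‖ := Matrix.l2_opNorm_mul _ _
      _ ≤ ‖Vᵀ‖ * ‖E‖ * ‖U‖ := by gcongr; exact Matrix.l2_opNorm_mul _ _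
      _ ≤ ‖V‖ * ε₁ * ‖U‖ := by rw [hVt]; gcongr
      _ = lam * ε₁ := by rw [hlam]; ring
  have hZnorm : ‖Z‖ ≤ μ := by
    calc ‖Z‖ = ‖((1 : Matrix (Fin k) (Fin k) ℝ) + Vᵀ * A⁻¹ * U) + Vᵀ * E * U‖ := by
          rw [hZdef, hCsplit, add_assoc]
      _ ≤ ‖(1 : Matrix (Fin k) (Fin k) ℝ) + Vᵀ * A⁻¹ * U‖ + ‖Vᵀ * E * U‖ := norm_add_le _ _
      _ ≤ β + lam * ε₁ := by rw [hβ]; gcongr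
      _ = μ := hμ.symm
  have hZF : ‖Z * F‖ ≤ μ * ε₂ := by
    calc ‖Z * F‖ ≤ ‖Z‖ * ‖F‖ := Matrix.l2_opNorm_mul _ _
      _ ≤ μ * ε₂ := mul_le_mul hZnorm hWcap (norm_nonneg _) hμ0
  have hZFhalf : ‖Z * F‖ < 1 / 2 := lt_of_le_of_lt hZF hμε₂
  have hZFlt : ‖Z * F‖ < 1 := by linarith
  have huZF : IsUnit (1 + Z * F) := aux_unit _ hZFlt
  have huZFdet := (Matrix.isUnit_iff_isUnit_det _).mp huZF
  have hZFinv : ‖(1 + Z * F)⁻¹‖ ≤ 2 := by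
    have h1 := aux_inv_norm _ hZFlt
    have h2 : ((1:ℝ) - ‖Z * F‖)⁻¹ ≤ 2 := by
      rw [inv_le_comm₀ (by linarith) (by norm_num)]
      linarith
    linarith
  -- W = Z⁻¹ * (1 + Z*F), so W⁻¹ = (1+Z*F)⁻¹ * Z
  have hWfac : W = Z⁻¹ * (1 + Z * F) := by
    rw [Matrix.mul_add, Matrix.mul_one, ← Matrix.mul_assoc, Matrix.nonsing_inv_mul Z hZdet,
      Matrix.one_mul, hF]
    abel
  have hWinv_eq : W⁻¹ = (1 + Z * F)⁻¹ * Z := by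
    rw [hWfac, Matrix.mul_inv_rev, Matrix.nonsing_inv_nonsing_inv Z hZdet]
  obtain ⟨G, hGdef⟩ : ∃ G, G = (1 + Z * F)⁻¹ * (Z * F * Z) := ⟨_, rfl⟩
  have hGnorm : ‖G‖ ≤ 2 * (μ ^ 2 * ε₂) := by
    rw [hGdef]
    calc ‖(1 + Z * F)⁻¹ * (Z * F * Z)‖ ≤ ‖(1 + Z * F)⁻¹‖ * ‖Z * F * Z‖ :=
          Matrix.l2_opNorm_mul _ _
      _ ≤ 2 * (μ ^ 2 * ε₂) := by
          have h1 : ‖Z * F * Z‖ ≤ μ ^ 2 * ε₂ := by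
            calc ‖Z * F * Z‖ ≤ ‖Z * F‖ * ‖Z‖ := Matrix.l2_opNorm_mul _ _
              _ ≤ (μ * ε₂) * μ := mul_le_mul hZF hZnorm (norm_nonneg _) (by positivity)
              _ = μ ^ 2 * ε₂ := by ring
          have := mul_le_mul hZFinv h1 (norm_nonneg _) (by norm_num)
          linarith
  have hGhalf : ‖G‖ < 1 / 2 := lt_of_le_of_lt hGnorm (by linarith)
  have hGlt : ‖G‖ < 1 := by linarith
  -- W⁻¹ - C = 1 - G
  have hcap_eq : W⁻¹ - C = 1 - G := by
    have hkey : (1 + Z * F)⁻¹ = 1 - (1 + Z * F)⁻¹ * (Z * F) := by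
      have key : (1 + Z * F)⁻¹ * (1 + Z * F) = 1 := Matrix.nonsing_inv_mul _ huZFdet
      rw [Matrix.mul_add, Matrix.mul_one] at key
      exact eq_sub_of_add_eq key
    rw [hWinv_eq, hkey, Matrix.sub_mul, Matrix.one_mul, hGdef, Matrix.mul_assoc, hZdef]
    abel
  obtain ⟨D, hDdef⟩ : ∃ D, D = (W⁻¹ - C)⁻¹ := ⟨_, rfl⟩
  have hDnorm : ‖D‖ ≤ 2 := by
    have h1 : D = (1 + (-G))⁻¹ := by rw [hDdef, hcap_eq, sub_eq_add_neg]
    have h2 : ‖(-G : Matrix (Fin k) (Fin k) ℝ)‖ < 1 := by rwa [norm_neg]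
    rw [h1]
    have h4 := aux_inv_norm (-G) h2
    rw [norm_neg] at h4
    have h3 : ((1:ℝ) - ‖G‖)⁻¹ ≤ 2 := by
      rw [inv_le_comm₀ (by linarith) (by norm_num)]
      linarith
    linarith
  have hDinv : D * (W⁻¹ - C) = 1 := by rw [hDdef]; exact Matrix.nonsing_inv_mul _ hWCdet
  have h1D : (1 : Matrix (Fin k) (Fin k) ℝ) - D = -(D * G) := by
    have h5 : D * (1 - G) = 1 := by rw [← hcap_eq]; exact hDinv
    rw [Matrix.mul_sub, Matrix.mul_one] at h5
    rw [← h5]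
    abel
  have h1Dnorm : ‖(1 : Matrix (Fin k) (Fin k) ℝ) - D‖ ≤ 4 * (μ ^ 2 * ε₂) := by
    rw [h1D, norm_neg]
    calc ‖D * G‖ ≤ ‖D‖ * ‖G‖ := Matrix.l2_opNorm_mul _ _
      _ ≤ 2 * (2 * (μ ^ 2 * ε₂)) := mul_le_mul hDnorm hGnorm (norm_nonneg _) (by norm_num)
      _ = 4 * (μ ^ 2 * ε₂) := by ring
  -- invertibility of Y
  have hXi : X⁻¹ * X = 1 := Matrix.nonsing_inv_mul X hXdet
  have hWW : W⁻¹ * W = 1 := Matrix.nonsing_inv_mul W hWdet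
  have hDW : D - D * (C * W) = W := by
    have h1 : (W⁻¹ - C) * W = 1 - C * W := by rw [Matrix.sub_mul, hWW]
    have h2 : D * ((W⁻¹ - C) * W) = W := by rw [← Matrix.mul_assoc, hDinv, Matrix.one_mul]
    rw [h1, Matrix.mul_sub, Matrix.mul_one] at h2
    exact h2
  have key : (X⁻¹ + U * D * Vᵀ) * (X - X * U * W * Vᵀ * X) = 1 := by
    have hXX : ∀ M : Matrix (Fin n) (Fin n) ℝ, X⁻¹ * (X * M) = M := fun M => by
      rw [← Matrix.mul_assoc, hXi, Matrix.one_mul]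
    have e1 : (X⁻¹ + U * D * Vᵀ) * (X - X * U * W * Vᵀ * X)
        = X⁻¹ * X - X⁻¹ * (X * (U * (W * (Vᵀ * X))))
          + (U * (D * (Vᵀ * X)) - U * (D * (Vᵀ * (X * (U * (W * (Vᵀ * X))))))) := by
      simp only [Matrix.add_mul, Matrix.mul_sub, Matrix.mul_assoc]
      abel
    rw [e1, hXi, hXX]
    have e2 : U * (D * (Vᵀ * (X * (U * (W * (Vᵀ * X)))))) = U * ((D * (C * W)) * (Vᵀ * X)) := by
      rw [hC]
      simp only [Matrix.mul_assoc]
    have e3 : U * (D * (Vᵀ * X)) - U * ((D * (C * W)) * (Vᵀ * X))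
        = U * ((D - D * (C * W)) * (Vᵀ * X)) := by
      simp only [Matrix.sub_mul, Matrix.mul_sub]
    rw [e2, e3, hDW]
    abel
  have hYunit : IsUnit (X - X * U * W * Vᵀ * X) := by
    rw [Matrix.isUnit_iff_isUnit_det]
    have := mul_eq_one_comm.mp key
    have hd : (X - X * U * W * Vᵀ * X).det * (X⁻¹ + U * D * Vᵀ).det = 1 := by
      rw [← Matrix.det_mul, this, Matrix.det_one]
    exact IsUnit.of_mul_eq_one _ hd
  have hYinv : (X - X * U * W * Vᵀ * X)⁻¹ = X⁻¹ + U * D * Vᵀ :=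
    Matrix.inv_eq_left_inv key
  refine ⟨hYunit, ?_⟩
  -- A - X⁻¹ bound
  have hAE : ‖A * E‖ ≤ ‖A‖ * ε₁ := by
    calc ‖A * E‖ ≤ ‖A‖ * ‖E‖ := Matrix.l2_opNorm_mul _ _
      _ ≤ ‖A‖ * ε₁ := by gcongr
  have hAElt : ‖A * E‖ < 1 := by linarith
  have huAE : IsUnit (1 + A * E) := aux_unit _ hAElt
  have huAEdet := (Matrix.isUnit_iff_isUnit_det _).mp huAE
  have hAEinv : ‖(1 + A * E)⁻¹‖ ≤ 2 := by
    have h1 := aux_inv_norm _ hAElt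
    have h2 : ((1:ℝ) - ‖A * E‖)⁻¹ ≤ 2 := by
      rw [inv_le_comm₀ (by linarith) (by norm_num)]
      linarith
    linarith
  have hXfac : X = A⁻¹ * (1 + A * E) := by
    rw [Matrix.mul_add, Matrix.mul_one, ← Matrix.mul_assoc, Matrix.nonsing_inv_mul A hAdet,
      Matrix.one_mul, hE]
    abel
  have hXinv_eq : X⁻¹ = (1 + A * E)⁻¹ * A := by
    rw [hXfac, Matrix.mul_inv_rev, Matrix.nonsing_inv_nonsing_inv A hAdet]
  have hAmX : A - X⁻¹ = (1 + A * E)⁻¹ * (A * E) * A := by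
    have hkey : (1 + A * E)⁻¹ = 1 - (1 + A * E)⁻¹ * (A * E) := by
      have key2 : (1 + A * E)⁻¹ * (1 + A * E) = 1 := Matrix.nonsing_inv_mul _ huAEdet
      rw [Matrix.mul_add, Matrix.mul_one] at key2
      exact eq_sub_of_add_eq key2
    rw [hXinv_eq]
    conv_lhs => rw [hkey]
    rw [Matrix.sub_mul, Matrix.one_mul]
    abel
  have hAmXnorm : ‖A - X⁻¹‖ ≤ 2 * ε₁ * ‖A‖ ^ 2 := by
    rw [hAmX]
    calc ‖(1 + A * E)⁻¹ * (A * E) * A‖ ≤ ‖(1 + A * E)⁻¹ * (A * E)‖ * ‖A‖ :=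
          Matrix.l2_opNorm_mul _ _
      _ ≤ ‖(1 + A * E)⁻¹‖ * ‖A * E‖ * ‖A‖ := by gcongr; exact Matrix.l2_opNorm_mul _ _
      _ ≤ 2 * (‖A‖ * ε₁) * ‖A‖ := by gcongr
      _ = 2 * ε₁ * ‖A‖ ^ 2 := by ring
  -- final assembly
  have hBdiff : B - (X - X * U * W * Vᵀ * X)⁻¹ = (A - X⁻¹) + U * (1 - D) * Vᵀ := by
    rw [hYinv, hB, Matrix.mul_sub, Matrix.sub_mul, Matrix.mul_one]
    abel
  have hU1D : ‖U * (1 - D) * Vᵀ‖ ≤ lam * (4 * (μ ^ 2 * ε₂)) := by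
    calc ‖U * (1 - D) * Vᵀ‖ ≤ ‖U * (1 - D)‖ * ‖Vᵀ‖ := Matrix.l2_opNorm_mul _ _
      _ ≤ ‖U‖ * ‖(1 : Matrix (Fin k) (Fin k) ℝ) - D‖ * ‖Vᵀ‖ := by
          gcongr; exact Matrix.l2_opNorm_mul _ _
      _ ≤ ‖U‖ * (4 * (μ ^ 2 * ε₂)) * ‖V‖ := by rw [hVt]; gcongr
      _ = lam * (4 * (μ ^ 2 * ε₂)) := by rw [hlam]; ring
  -- λ μ² ≤ 2
  have hlam_half : lam ≤ 1 / 2 := by linarith [hsmall, hσ]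
  have hlamAinv : lam * ‖A⁻¹‖ ≤ 1 / 2 := by
    rcases (norm_nonneg (A⁻¹)).eq_or_lt with h | h
    · rw [← h]; linarith
    · have h1 : lam * ‖A⁻¹‖ ≤ (1/2 * ‖A⁻¹‖⁻¹) * ‖A⁻¹‖ := by
        exact mul_le_mul_of_nonneg_right hsmall (norm_nonneg _)
      rw [mul_assoc, inv_mul_cancel₀ (ne_of_gt h), mul_one] at h1
      exact h1
  have hβbound : β ≤ 3 / 2 := by
    have h1 : ‖Vᵀ * A⁻¹ * U‖ ≤ lam * ‖A⁻¹‖ := by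
      calc ‖Vᵀ * A⁻¹ * U‖ ≤ ‖Vᵀ * A⁻¹‖ * ‖U‖ := Matrix.l2_opNorm_mul _ _
        _ ≤ ‖Vᵀ‖ * ‖A⁻¹‖ * ‖U‖ := by gcongr; exact Matrix.l2_opNorm_mul _ _
        _ = lam * ‖A⁻¹‖ := by rw [hVt, hlam]; ring
    have h2 : β ≤ 1 + ‖Vᵀ * A⁻¹ * U‖ := by
      rw [hβ]
      calc ‖(1 : Matrix (Fin k) (Fin k) ℝ) + Vᵀ * A⁻¹ * U‖ ≤
            ‖(1 : Matrix (Fin k) (Fin k) ℝ)‖ + ‖Vᵀ * A⁻¹ * U‖ := norm_add_le _ _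
        _ ≤ 1 + ‖Vᵀ * A⁻¹ * U‖ := by gcongr; exact aux_one_le
    linarith
  have hμ2 : μ ≤ 2 := by
    rw [hμ]
    nlinarith
  have hμsq : μ ^ 2 ≤ 4 := by nlinarith
  have ht0 : 0 ≤ μ ^ 2 * ε₂ := mul_nonneg (sq_nonneg μ) hε₂0
  have ht1 : μ ^ 2 * ε₂ ≤ 4 * ε₂ := mul_le_mul_of_nonneg_right hμsq hε₂0
  have ht2 : lam * (μ ^ 2 * ε₂) ≤ 1 / 2 * (μ ^ 2 * ε₂) :=
    mul_le_mul_of_nonneg_right hlam_half ht0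
  have hlamμ : lam * (4 * (μ ^ 2 * ε₂)) ≤ 8 * ε₂ := by nlinarith
  calc ‖B - (X - X * U * W * Vᵀ * X)⁻¹‖ = ‖(A - X⁻¹) + U * (1 - D) * Vᵀ‖ := by rw [hBdiff]
    _ ≤ ‖A - X⁻¹‖ + ‖U * (1 - D) * Vᵀ‖ := norm_add_le _ _
    _ ≤ 2 * ε₁ * ‖A‖ ^ 2 + lam * (4 * (μ ^ 2 * ε₂)) := by gcongr
    _ ≤ 2 * ε₁ * ‖A‖ ^ 2 + 8 * ε₂ := by linarith
end
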